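/- arXiv:1506.05740 — 2 statements merged into one kernel-verified Lean document; each statement's English description precedes it below -/
import Mathlib

section
/- Let μ ∈ ℝ, σ ≥ 0, and let V be a measure on ℝ with V({0}) = 0 and ∫_ℝ min(1, t²) dV(t) < ∞; let f be the associated Lévy exponent f(ξ) = iμξ − σ²ξ²/2 + ∫_ℝ (e^{iξt} − 1 − iξt·1_{|t|≤1}(t)) dV(t). Let 𝕋^d carry its normalized Haar probability measure λ. Suppose 0 < ε ≤ 1 and M ≥ 1 satisfy V({t : |t| > M}) ≤ ε, and suppose φ : 𝕋^d → ℝ is square-integrable with ‖φ‖_{L²(𝕋^d)} ≤ ε/M. Then | ∫_{𝕋^d} f(φ(r)) dλ(r) | ≤ κ ε, where κ = |μ| + σ²/2 + ∫_ℝ min(1, t²) dV(t) + 2 < ∞. -/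
open MeasureTheory

open Complex

open scoped ENNReal NNReal

lemma L1 (x : ℝ) : ‖Complex.exp (x * Complex.I) - 1‖ ≤ |x| := by
  have hre : (Complex.exp (x * I) - 1).re = Real.cos x - 1 := by
    simp [Complex.exp_ofReal_mul_I_re]
  have him : (Complex.exp (x * I) - 1).im = Real.sin x := by
    simp [Complex.exp_ofReal_mul_I_im]
  have hsq : ‖Complex.exp (x * I) - 1‖ ^ 2 = 2 - 2 * Real.cos x := by
    rw [← Complex.normSq_eq_norm_sq, Complex.normSq_apply, hre, him]
    have := Real.sin_sq_add_cos_sq x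
    nlinarith
  have hc := Real.one_sub_sq_div_two_le_cos (x := x)
  nlinarith [norm_nonneg (Complex.exp (x * I) - 1), abs_nonneg x, _root_.sq_abs x]

lemma L2aux (x : ℝ) (hx : 0 ≤ x) :
    ‖Complex.exp (x * Complex.I) - 1 - x * Complex.I‖ ≤ x ^ 2 / 2 := by
  have hderiv : ∀ s ∈ Set.uIcc (0:ℝ) x,
      HasDerivAt (fun s : ℝ => Complex.exp (s * I) - s * I)
        (I * (Complex.exp (s * I) - 1)) s := by
    intro s _
    have h1 : HasDerivAt (fun s : ℝ => (s : ℂ) * I) I s := by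
      simpa using (Complex.ofRealCLM.hasDerivAt (x := s)).mul_const I
    have h2 : HasDerivAt (fun s : ℝ => Complex.exp ((s:ℂ) * I)) (Complex.exp (s * I) * I) s :=
      h1.cexp
    have := h2.sub h1
    exact this.congr_deriv (by ring)
  have hcont : IntervalIntegrable (fun s : ℝ => I * (Complex.exp (s * I) - 1))
      MeasureTheory.volume 0 x := by
    apply Continuous.intervalIntegrable
    continuity
  have key : ∫ s in (0:ℝ)..x, I * (Complex.exp (s * I) - 1) =
      Complex.exp (x * I) - 1 - x * I := by
    rw [intervalIntegral.integral_eq_sub_of_hasDerivAt hderiv hcont]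
    simp
    ring
  rw [← key]
  have hb : ∀ s ∈ Set.uIoc (0:ℝ) x, ‖I * (Complex.exp (s * I) - 1)‖ ≤ s := by
    intro s hs
    rw [Set.uIoc_of_le hx] at hs
    rw [norm_mul, Complex.norm_I, one_mul]
    calc ‖Complex.exp (s * I) - 1‖ ≤ |s| := L1 s
    _ = s := abs_of_pos hs.1
  calc ‖∫ s in (0:ℝ)..x, I * (Complex.exp (s * I) - 1)‖
      ≤ |∫ s in (0:ℝ)..x, s| := by
        apply intervalIntegral.norm_integral_le_abs_of_norm_le
        · exact (ae_restrict_iff' measurableSet_uIoc).2 (.of_forall hb)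
        · exact continuous_id.intervalIntegrable 0 x
    _ = x ^ 2 / 2 := by rw [integral_id, _root_.abs_of_nonneg (by nlinarith)]; ring

lemma L2 (x : ℝ) : ‖Complex.exp (x * Complex.I) - 1 - x * Complex.I‖ ≤ x ^ 2 / 2 := by
  rcases le_total 0 x with hx | hx
  · exact L2aux x hx
  · have h := L2aux (-x) (by linarith)
    have heq : Complex.exp ((-x : ℝ) * I) - 1 - (-x : ℝ) * I =
        (starRingEnd ℂ) (Complex.exp (x * I) - 1 - x * I) := by
      simp [map_sub, ← Complex.exp_conj]
    rw [heq, RCLike.norm_conj] at h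
    calc ‖Complex.exp (x * I) - 1 - x * I‖ ≤ (-x) ^ 2 / 2 := h
      _ = x ^ 2 / 2 := by ring

noncomputable def gI (ξ t : ℝ) : ℂ :=
  Complex.exp (Complex.I * (ξ : ℂ) * (t : ℂ)) - 1 -
    Complex.I * (ξ : ℂ) * Set.indicator {s : ℝ | |s| ≤ 1} (fun s : ℝ => (s : ℂ)) t

lemma gI_eq_of_le {t : ℝ} (ξ : ℝ) (ht : |t| ≤ 1) :
    gI ξ t = Complex.exp (((ξ * t : ℝ) : ℂ) * I) - 1 - ((ξ * t : ℝ) : ℂ) * I := by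
  unfold gI
  rw [Set.indicator_of_mem (show t ∈ {s : ℝ | |s| ≤ 1} from ht)]
  push_cast
  ring_nf

lemma gI_eq_of_gt {t : ℝ} (ξ : ℝ) (ht : 1 < |t|) :
    gI ξ t = Complex.exp (((ξ * t : ℝ) : ℂ) * I) - 1 := by
  unfold gI
  rw [Set.indicator_of_notMem (show t ∉ {s : ℝ | |s| ≤ 1} from not_le.2 ht)]
  push_cast
  ring_nf

lemma norm_gI_le_of_le {t : ℝ} (ξ : ℝ) (ht : |t| ≤ 1) :
    ‖gI ξ t‖ ≤ ξ ^ 2 / 2 * t ^ 2 := by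
  rw [gI_eq_of_le ξ ht]
  calc ‖_‖ ≤ (ξ * t) ^ 2 / 2 := L2 (ξ * t)
    _ = ξ ^ 2 / 2 * t ^ 2 := by ring

lemma norm_gI_le_mul {t : ℝ} (ξ : ℝ) (ht : 1 < |t|) :
    ‖gI ξ t‖ ≤ |ξ| * |t| := by
  rw [gI_eq_of_gt ξ ht]
  calc ‖_‖ ≤ |ξ * t| := L1 (ξ * t)
    _ = |ξ| * |t| := abs_mul _ _

lemma norm_gI_le_two {t : ℝ} (ξ : ℝ) (ht : 1 < |t|) : ‖gI ξ t‖ ≤ 2 := by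
  rw [gI_eq_of_gt ξ ht]
  calc ‖Complex.exp (((ξ * t : ℝ) : ℂ) * I) - 1‖
      ≤ ‖Complex.exp (((ξ * t : ℝ) : ℂ) * I)‖ + ‖(1 : ℂ)‖ := norm_sub_le _ _
    _ = 2 := by rw [Complex.norm_exp_ofReal_mul_I]; norm_num

lemma norm_gI_le (ξ t : ℝ) : ‖gI ξ t‖ ≤ (ξ ^ 2 / 2 + 2) * min 1 (t ^ 2) := by
  rcases le_or_gt (|t|) 1 with ht | ht
  · have ht2 : t ^ 2 ≤ 1 := by nlinarith [_root_.sq_abs t, abs_nonneg t]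
    rw [min_eq_right ht2]
    calc ‖gI ξ t‖ ≤ ξ ^ 2 / 2 * t ^ 2 := norm_gI_le_of_le ξ ht
      _ ≤ (ξ ^ 2 / 2 + 2) * t ^ 2 := by nlinarith [sq_nonneg t, sq_nonneg ξ]
  · have ht2 : (1 : ℝ) ≤ t ^ 2 := by nlinarith [_root_.sq_abs t]
    rw [min_eq_left ht2]
    calc ‖gI ξ t‖ ≤ 2 := norm_gI_le_two ξ ht
      _ ≤ (ξ ^ 2 / 2 + 2) * 1 := by nlinarith [sq_nonneg ξ]

lemma gI_meas (ξ : ℝ) : Measurable (gI ξ) := by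
  unfold gI
  apply Measurable.sub
  · apply Measurable.sub
    · exact (Complex.continuous_exp.comp (by fun_prop)).measurable
    · exact measurable_const
  · exact measurable_const.mul
      ((Complex.continuous_ofReal.measurable).indicator
        ((isClosed_le _root_.continuous_abs continuous_const).measurableSet))

lemma gI_cont (t : ℝ) : Continuous fun ξ => gI ξ t := by
  unfold gI
  fun_prop

section Vlemmas

variable {V : Measure ℝ}

lemma min_integrable (hV : ∫⁻ t, ENNReal.ofReal (min 1 (t ^ 2)) ∂V < ⊤) : Integrable (fun t : ℝ => min 1 (t ^ 2)) V := by
  refine ⟨(measurable_const.min (measurable_id.pow_const 2)).aestronglyMeasurable, ?_⟩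
  rw [hasFiniteIntegral_iff_ofReal (Filter.Eventually.of_forall fun t =>
    le_min zero_le_one (sq_nonneg t))]
  exact hV

lemma gI_integrable (hV : ∫⁻ t, ENNReal.ofReal (min 1 (t ^ 2)) ∂V < ⊤) (ξ : ℝ) : Integrable (gI ξ) V := by
  refine Integrable.mono' (((min_integrable hV)).const_mul (ξ ^ 2 / 2 + 2))
    (gI_meas ξ).aestronglyMeasurable ?_
  exact Filter.Eventually.of_forall fun t => norm_gI_le ξ t

lemma F_cont (hV : ∫⁻ t, ENNReal.ofReal (min 1 (t ^ 2)) ∂V < ⊤) : Continuous fun ξ => ∫ t, gI ξ t ∂V := by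
  rw [continuous_iff_continuousAt]
  intro x
  apply MeasureTheory.continuousAt_of_dominated (F := fun ξ t => gI ξ t)
    (bound := fun t => ((|x| + 1) ^ 2 / 2 + 2) * min 1 (t ^ 2))
  · exact Filter.Eventually.of_forall fun ξ => (gI_meas ξ).aestronglyMeasurable
  · filter_upwards [Metric.ball_mem_nhds x one_pos] with ξ hξ
    apply Filter.Eventually.of_forall
    intro t
    have hξx : |ξ| ≤ |x| + 1 := by
      have := abs_sub_abs_le_abs_sub ξ x
      have h2 : |ξ - x| < 1 := by simpa [Real.dist_eq] using hξ
      linarith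
    calc ‖gI ξ t‖ ≤ (ξ ^ 2 / 2 + 2) * min 1 (t ^ 2) := norm_gI_le ξ t
      _ ≤ ((|x| + 1) ^ 2 / 2 + 2) * min 1 (t ^ 2) := by
          have h0 : (0:ℝ) ≤ min 1 (t ^ 2) := le_min zero_le_one (sq_nonneg t)
          have : ξ ^ 2 ≤ (|x| + 1) ^ 2 := by nlinarith [_root_.sq_abs ξ, abs_nonneg ξ]
          nlinarith
  · exact (min_integrable hV).const_mul _
  · exact Filter.Eventually.of_forall fun t => (gI_cont t).continuousAt

end Vlemmas

/-- The Lévy exponent associated with the triplet `(μ, σ², V)` via the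
Lévy–Khintchine representation. -/
noncomputable def levyExponent (μ σ : ℝ) (V : Measure ℝ) (ξ : ℝ) : ℂ :=
  Complex.I * (μ : ℂ) * (ξ : ℂ) - (σ : ℂ) ^ 2 * (ξ : ℂ) ^ 2 / 2 +
    ∫ t, (Complex.exp (Complex.I * (ξ : ℂ) * (t : ℂ)) - 1 -
      Complex.I * (ξ : ℂ) * Set.indicator {s : ℝ | |s| ≤ 1} (fun s : ℝ => (s : ℂ)) t) ∂V

set_option maxHeartbeats 1000000 in
theorem stmt9 (d : ℕ) (hd : 1 ≤ d) (μ σ : ℝ) (hσ : 0 ≤ σ) (V : Measure ℝ)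
    (hV0 : V {0} = 0) (hV : ∫⁻ t, ENNReal.ofReal (min 1 (t ^ 2)) ∂V < ⊤)
    (ε M : ℝ) (hε : 0 < ε) (hε1 : ε ≤ 1) (hM : 1 ≤ M)
    (hVM : V {s : ℝ | M < |s|} ≤ ENNReal.ofReal ε)
    (φ : (Fin d → AddCircle (1 : ℝ)) → ℝ) (hφ : MemLp φ 2 volume)
    (hφ2 : eLpNorm φ 2 volume ≤ ENNReal.ofReal (ε / M)) :
    ‖∫ r, levyExponent μ σ V (φ r) ∂volume‖ ≤
      (|μ| + σ ^ 2 / 2 + (∫⁻ t, ENNReal.ofReal (min 1 (t ^ 2)) ∂V).toReal + 2) * ε := by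
  haveI hP1 : IsProbabilityMeasure (volume : Measure (AddCircle (1 : ℝ))) :=
    ⟨by rw [AddCircle.measure_univ]; norm_num⟩
  haveI hP : IsProbabilityMeasure (volume : Measure (Fin d → AddCircle (1 : ℝ))) := by
    constructor
    rw [MeasureTheory.volume_pi, Measure.pi_univ]
    simp [measure_univ]
  set F : ℝ → ℂ := fun ξ => ∫ t, gI ξ t ∂V with hFdef
  set κ : ℝ := (∫⁻ t, ENNReal.ofReal (min 1 (t ^ 2)) ∂V).toReal with hκdef
  set A : Set ℝ := {t : ℝ | |t| ≤ 1} with hAdef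
  set B : Set ℝ := {t : ℝ | 1 < |t| ∧ |t| ≤ M} with hBdef
  set C : Set ℝ := {s : ℝ | M < |s|} with hCdef
  have hmin := min_integrable hV
  have hminnn : ∀ t : ℝ, 0 ≤ min 1 (t ^ 2) := fun t => le_min zero_le_one (sq_nonneg t)
  have hκeq : ∫ t, min 1 (t ^ 2) ∂V = κ := by
    rw [hκdef, integral_eq_lintegral_of_nonneg_ae (Filter.Eventually.of_forall hminnn)
      hmin.aestronglyMeasurable]
  have hκ0 : 0 ≤ κ := ENNReal.toReal_nonneg
  have hAm : MeasurableSet A := (isClosed_le _root_.continuous_abs continuous_const).measurableSet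
  have hBm : MeasurableSet B :=
    ((isOpen_lt continuous_const _root_.continuous_abs).measurableSet).inter
      (isClosed_le _root_.continuous_abs continuous_const).measurableSet
  have hCm : MeasurableSet C := (isOpen_lt continuous_const _root_.continuous_abs).measurableSet
  have hmeasmin : Measurable fun t : ℝ => ENNReal.ofReal (min 1 (t ^ 2)) :=
    (measurable_const.min (measurable_id.pow_const 2)).ennreal_ofReal
  have hminB : ∀ t : ℝ, 1 < |t| → min 1 (t ^ 2) = 1 := by
    intro t ht
    exact min_eq_left (by nlinarith [_root_.sq_abs t])
  have hVB : V B < ⊤ := by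
    calc V B = ∫⁻ _ in B, 1 ∂V := (setLIntegral_one B).symm
      _ ≤ ∫⁻ t in B, ENNReal.ofReal (min 1 (t ^ 2)) ∂V := by
          refine setLIntegral_mono hmeasmin fun t ht => ?_
          rw [hminB t ht.1]; simp
      _ ≤ ∫⁻ t, ENNReal.ofReal (min 1 (t ^ 2)) ∂V := setLIntegral_le_lintegral _ _
      _ < ⊤ := hV
  have hVC : V C < ⊤ := by
    calc V C = ∫⁻ _ in C, 1 ∂V := (setLIntegral_one C).symm
      _ ≤ ∫⁻ t in C, ENNReal.ofReal (min 1 (t ^ 2)) ∂V := by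
          refine setLIntegral_mono hmeasmin fun t ht => ?_
          rw [hminB t (lt_of_le_of_lt hM ht)]; simp
      _ ≤ ∫⁻ t, ENNReal.ofReal (min 1 (t ^ 2)) ∂V := setLIntegral_le_lintegral _ _
      _ < ⊤ := hV
  set a : ℝ := ∫ t in A, min 1 (t ^ 2) ∂V with hadef
  set b : ℝ := (V B).toReal with hbdef
  set c : ℝ := (V C).toReal with hcdef
  have ha0 : 0 ≤ a := setIntegral_nonneg hAm fun t _ => hminnn t
  have hb0 : 0 ≤ b := ENNReal.toReal_nonneg
  have hc0 : 0 ≤ c := ENNReal.toReal_nonneg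
  have hcε : c ≤ ε := by
    calc c ≤ (ENNReal.ofReal ε).toReal := ENNReal.toReal_mono ENNReal.ofReal_ne_top hVM
      _ = ε := ENNReal.toReal_ofReal hε.le
  have hbeq : b = ∫ t in B, min 1 (t ^ 2) ∂V := by
    rw [setIntegral_congr_fun hBm (fun t ht => hminB t ht.1)]
    rw [setIntegral_const]
    simp [hbdef, Measure.real]
  have hdisjAB : Disjoint A B := by
    rw [Set.disjoint_left]
    rintro t ht ⟨h1, _⟩
    exact absurd ht (not_le.2 h1)
  have hab : a + b ≤ κ := by
    have h1 : a + b = ∫ t in A ∪ B, min 1 (t ^ 2) ∂V := by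
      rw [setIntegral_union hdisjAB hBm hmin.integrableOn hmin.integrableOn, hbeq]
    rw [h1, ← hκeq]
    exact setIntegral_le_integral hmin (Filter.Eventually.of_forall hminnn)
  -- pointwise bound on F
  have hFb : ∀ ξ : ℝ, ‖F ξ‖ ≤ a / 2 * ξ ^ 2 + M * b * |ξ| + 2 * c := by
    intro ξ
    have hint := gI_integrable hV ξ
    have hni : Integrable (fun t => ‖gI ξ t‖) V := hint.norm
    have hU : A ∪ (B ∪ C) = Set.univ := by
      ext t
      simp only [hAdef, hBdef, hCdef, Set.mem_union, Set.mem_setOf_eq, Set.mem_univ, iff_true]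
      rcases le_or_gt (|t|) 1 with h | h
      · exact Or.inl h
      · rcases le_or_gt (|t|) M with h2 | h2
        · exact Or.inr (Or.inl ⟨h, h2⟩)
        · exact Or.inr (Or.inr h2)
    have hdisjBC : Disjoint B C := by
      rw [Set.disjoint_left]
      rintro t ⟨_, h2⟩ h3
      exact absurd h3 (not_lt.2 h2)
    have hdisjA : Disjoint A (B ∪ C) := by
      rw [Set.disjoint_left]
      rintro t ht (⟨h1, _⟩ | h1)
      · exact absurd ht (not_le.2 h1)
      · exact absurd ht (not_le.2 (lt_of_le_of_lt hM h1))
    have hsplit : ∫ t, ‖gI ξ t‖ ∂V =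
        (∫ t in A, ‖gI ξ t‖ ∂V) + ((∫ t in B, ‖gI ξ t‖ ∂V) + ∫ t in C, ‖gI ξ t‖ ∂V) := by
      rw [← setIntegral_union hdisjBC hCm hni.integrableOn hni.integrableOn,
        ← setIntegral_union hdisjA (hBm.union hCm) hni.integrableOn hni.integrableOn, hU,
        setIntegral_univ]
    have hA : ∫ t in A, ‖gI ξ t‖ ∂V ≤ ξ ^ 2 / 2 * a := by
      calc ∫ t in A, ‖gI ξ t‖ ∂V ≤ ∫ t in A, ξ ^ 2 / 2 * min 1 (t ^ 2) ∂V := by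
            refine setIntegral_mono_on hni.integrableOn ((hmin.const_mul _).integrableOn) hAm
              fun t ht => ?_
            have h1 : min 1 (t ^ 2) = t ^ 2 :=
              min_eq_right (by nlinarith [_root_.sq_abs t, abs_nonneg t, (show |t| ≤ 1 from ht)])
            rw [h1]
            exact norm_gI_le_of_le ξ ht
        _ = ξ ^ 2 / 2 * a := by rw [integral_const_mul]
    have hB : ∫ t in B, ‖gI ξ t‖ ∂V ≤ b * (|ξ| * M) := by
      calc ∫ t in B, ‖gI ξ t‖ ∂V ≤ ∫ _ in B, |ξ| * M ∂V := by
            refine setIntegral_mono_on hni.integrableOn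
              (integrableOn_const hVB.ne) hBm fun t ht => ?_
            calc ‖gI ξ t‖ ≤ |ξ| * |t| := norm_gI_le_mul ξ ht.1
              _ ≤ |ξ| * M := mul_le_mul_of_nonneg_left ht.2 (abs_nonneg ξ)
        _ = b * (|ξ| * M) := by rw [setIntegral_const]; simp [hbdef, Measure.real]
    have hC : ∫ t in C, ‖gI ξ t‖ ∂V ≤ c * 2 := by
      calc ∫ t in C, ‖gI ξ t‖ ∂V ≤ ∫ _ in C, (2 : ℝ) ∂V := by
            refine setIntegral_mono_on hni.integrableOn
              (integrableOn_const hVC.ne) hCm fun t ht => ?_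
            exact norm_gI_le_two ξ (lt_of_le_of_lt hM ht)
        _ = c * 2 := by rw [setIntegral_const]; simp [hcdef, Measure.real]
    calc ‖F ξ‖ ≤ ∫ t, ‖gI ξ t‖ ∂V := norm_integral_le_integral_norm _
      _ = _ := hsplit
      _ ≤ ξ ^ 2 / 2 * a + (b * (|ξ| * M) + c * 2) := add_le_add hA (add_le_add hB hC)
      _ = a / 2 * ξ ^ 2 + M * b * |ξ| + 2 * c := by ring
  -- integrability over r
  have hφm := hφ.aestronglyMeasurable
  have hφ1 : Integrable φ volume := hφ.integrable one_le_two
  have hφsq : Integrable (fun r => φ r ^ 2) volume := hφ.integrable_sq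
  have hFφm : AEStronglyMeasurable (fun r => F (φ r)) volume :=
    (F_cont hV).comp_aestronglyMeasurable hφm
  have hboundint : Integrable (fun r => a / 2 * φ r ^ 2 + M * b * |φ r| + 2 * c) volume :=
    ((hφsq.const_mul _).add ((hφ1.abs).const_mul _)).add (integrable_const _)
  have hFφint : Integrable (fun r => F (φ r)) volume :=
    Integrable.mono' hboundint hFφm (Filter.Eventually.of_forall fun r => hFb (φ r))
  -- L¹ and L² bounds on φ
  have hq0 : 0 ≤ ε / M := by positivity
  have hL1 : ∫ r, |φ r| ∂volume ≤ ε / M := by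
    calc ∫ r, |φ r| ∂volume = ∫ r, ‖φ r‖ ∂volume := by simp [Real.norm_eq_abs]
      _ = (∫⁻ r, ‖φ r‖ₑ ∂volume).toReal := integral_norm_eq_lintegral_enorm hφm
      _ = (eLpNorm φ 1 volume).toReal := by rw [eLpNorm_one_eq_lintegral_enorm]
      _ ≤ (ENNReal.ofReal (ε / M)).toReal := ENNReal.toReal_mono ENNReal.ofReal_ne_top
          ((eLpNorm_le_eLpNorm_of_exponent_le one_le_two hφm).trans hφ2)
      _ = ε / M := ENNReal.toReal_ofReal hq0
  have hL2 : ∫ r, φ r ^ 2 ∂volume ≤ (ε / M) ^ 2 := by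
    have e1 : ∀ x : ℝ, ENNReal.ofReal (x ^ 2) = (‖x‖₊ : ℝ≥0∞) ^ (2 : ℝ) := by
      intro x
      calc ENNReal.ofReal (x ^ 2) = ENNReal.ofReal (|x| ^ 2) := by rw [_root_.sq_abs]
        _ = ENNReal.ofReal |x| ^ (2 : ℕ) := by
            rw [← ENNReal.ofReal_pow (abs_nonneg x), _root_.sq_abs]
        _ = ((‖x‖₊ : ℝ≥0∞)) ^ (2 : ℕ) := by rw [← Real.enorm_eq_ofReal_abs]; rfl
        _ = _ := by rw [← ENNReal.rpow_natCast]; norm_num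
    have h2 : ∫⁻ r, ENNReal.ofReal (φ r ^ 2) ∂volume = (eLpNorm φ 2 volume) ^ 2 := by
      calc ∫⁻ r, ENNReal.ofReal (φ r ^ 2) ∂volume
          = ∫⁻ r, ‖φ r‖ₑ ^ ((2 : ℝ≥0∞).toReal) ∂volume := lintegral_congr fun r => by
            rw [ENNReal.toReal_ofNat]; exact e1 (φ r)
        _ = (eLpNorm φ 2 volume) ^ 2 := by
            rw [eLpNorm_eq_lintegral_rpow_enorm_toReal two_ne_zero ENNReal.ofNat_ne_top,
              ← ENNReal.rpow_natCast _ 2, ← ENNReal.rpow_mul]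
            norm_num
    have key : ∫⁻ r, ENNReal.ofReal (φ r ^ 2) ∂volume ≤ ENNReal.ofReal ((ε / M) ^ 2) := by
      rw [h2, ENNReal.ofReal_pow hq0]
      exact pow_le_pow_left₀ (by positivity) hφ2 2
    calc ∫ r, φ r ^ 2 ∂volume = (∫⁻ r, ENNReal.ofReal (φ r ^ 2) ∂volume).toReal :=
          integral_eq_lintegral_of_nonneg_ae (Filter.Eventually.of_forall fun r => sq_nonneg _)
            hφsq.aestronglyMeasurable
      _ ≤ (ENNReal.ofReal ((ε / M) ^ 2)).toReal :=
          ENNReal.toReal_mono ENNReal.ofReal_ne_top key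
      _ = (ε / M) ^ 2 := ENNReal.toReal_ofReal (by positivity)
  have hsq0 : 0 ≤ ∫ r, φ r ^ 2 ∂volume := integral_nonneg fun r => sq_nonneg _
  -- split the main integral
  have h1 : Integrable (fun r => Complex.I * (μ : ℂ) * (φ r : ℂ)) volume :=
    (hφ1.ofReal).const_mul _
  have heq2 : (fun r => (σ : ℂ) ^ 2 * (φ r : ℂ) ^ 2 / 2) =
      fun r => ((σ : ℂ) ^ 2 / 2) * ((φ r ^ 2 : ℝ) : ℂ) := by
    funext r; push_cast; ring
  have h2int : Integrable (fun r => (σ : ℂ) ^ 2 * (φ r : ℂ) ^ 2 / 2) volume := by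
    rw [heq2]; exact (hφsq.ofReal).const_mul _
  have hlevy : (fun r => levyExponent μ σ V (φ r)) = fun r =>
      (Complex.I * (μ : ℂ) * (φ r : ℂ) - (σ : ℂ) ^ 2 * (φ r : ℂ) ^ 2 / 2) + F (φ r) := by
    funext r
    simp only [levyExponent, hFdef, gI]
  have h12 : Integrable (fun r => Complex.I * (μ : ℂ) * (φ r : ℂ) -
      (σ : ℂ) ^ 2 * (φ r : ℂ) ^ 2 / 2) volume := h1.sub h2int
  have hsplit2 : ∫ r, levyExponent μ σ V (φ r) ∂volume =
      ((∫ r, Complex.I * (μ : ℂ) * (φ r : ℂ) ∂volume) -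
        ∫ r, (σ : ℂ) ^ 2 * (φ r : ℂ) ^ 2 / 2 ∂volume) + ∫ r, F (φ r) ∂volume := by
    rw [hlevy, integral_add h12 hFφint, integral_sub h1 h2int]
  have hoR1 : ∫ r, ((φ r : ℝ) : ℂ) ∂volume = ((∫ r, φ r ∂volume : ℝ) : ℂ) := integral_ofReal
  have hoR2 : ∫ r, ((φ r ^ 2 : ℝ) : ℂ) ∂volume = ((∫ r, φ r ^ 2 ∂volume : ℝ) : ℂ) :=
    integral_ofReal
  have hT1 : ‖∫ r, Complex.I * (μ : ℂ) * (φ r : ℂ) ∂volume‖ ≤ |μ| * (ε / M) := by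
    rw [integral_const_mul, hoR1]
    rw [norm_mul, norm_mul, Complex.norm_I, one_mul, Complex.norm_real, Complex.norm_real]
    refine mul_le_mul_of_nonneg_left ?_ (abs_nonneg μ)
    calc ‖∫ r, φ r ∂volume‖ ≤ ∫ r, ‖φ r‖ ∂volume := norm_integral_le_integral_norm _
      _ = ∫ r, |φ r| ∂volume := by simp [Real.norm_eq_abs]
      _ ≤ ε / M := hL1
  have hT2 : ‖∫ r, (σ : ℂ) ^ 2 * (φ r : ℂ) ^ 2 / 2 ∂volume‖ ≤ σ ^ 2 / 2 * (ε / M) ^ 2 := by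
    rw [heq2, integral_const_mul, hoR2]
    rw [norm_mul, Complex.norm_real]
    have hn1 : ‖(σ : ℂ) ^ 2 / 2‖ = σ ^ 2 / 2 := by
      rw [norm_div, norm_pow, Complex.norm_real]
      simp [Real.norm_eq_abs, _root_.sq_abs, _root_.abs_of_nonneg hσ]
    rw [hn1, Real.norm_eq_abs, _root_.abs_of_nonneg hsq0]
    exact mul_le_mul_of_nonneg_left hL2 (by positivity)
  have hT3 : ‖∫ r, F (φ r) ∂volume‖ ≤
      a / 2 * (ε / M) ^ 2 + M * b * (ε / M) + 2 * c := by
    calc ‖∫ r, F (φ r) ∂volume‖ ≤ ∫ r, ‖F (φ r)‖ ∂volume := norm_integral_le_integral_norm _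
      _ ≤ ∫ r, (a / 2 * φ r ^ 2 + M * b * |φ r| + 2 * c) ∂volume :=
          integral_mono hFφint.norm hboundint fun r => hFb (φ r)
      _ = a / 2 * (∫ r, φ r ^ 2 ∂volume) + M * b * (∫ r, |φ r| ∂volume) + 2 * c := by
          have i1 : Integrable (fun r => a / 2 * φ r ^ 2) volume := hφsq.const_mul _
          have i2 : Integrable (fun r => M * b * |φ r|) volume := (hφ1.abs).const_mul _
          have i12 : Integrable (fun r => a / 2 * φ r ^ 2 + M * b * |φ r|) volume := i1.add i2
          have i3 : Integrable (fun _ : Fin d → AddCircle (1 : ℝ) => 2 * c) volume :=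
            integrable_const _
          rw [integral_add i12 i3, integral_add i1 i2,
            integral_const_mul, integral_const_mul, integral_const]
          simp [measure_univ]
      _ ≤ a / 2 * (ε / M) ^ 2 + M * b * (ε / M) + 2 * c := by
          have habs0 : 0 ≤ ∫ r, |φ r| ∂volume := integral_nonneg fun r => abs_nonneg _
          gcongr
  -- final arithmetic
  have hMne : M ≠ 0 := by positivity
  have hqM : M * (ε / M) = ε := by field_simp
  have hqε : ε / M ≤ ε := by
    rw [div_le_iff₀ (by positivity)]
    nlinarith
  have hq2 : (ε / M) ^ 2 ≤ ε := by nlinarith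
  calc ‖∫ r, levyExponent μ σ V (φ r) ∂volume‖
      ≤ ‖(∫ r, Complex.I * (μ : ℂ) * (φ r : ℂ) ∂volume) -
          ∫ r, (σ : ℂ) ^ 2 * (φ r : ℂ) ^ 2 / 2 ∂volume‖ + ‖∫ r, F (φ r) ∂volume‖ := by
        rw [hsplit2]; exact norm_add_le _ _
    _ ≤ (‖∫ r, Complex.I * (μ : ℂ) * (φ r : ℂ) ∂volume‖ +
          ‖∫ r, (σ : ℂ) ^ 2 * (φ r : ℂ) ^ 2 / 2 ∂volume‖) + ‖∫ r, F (φ r) ∂volume‖ :=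
        add_le_add_left (norm_sub_le _ _) _
    _ ≤ (|μ| * (ε / M) + σ ^ 2 / 2 * (ε / M) ^ 2) +
          (a / 2 * (ε / M) ^ 2 + M * b * (ε / M) + 2 * c) :=
        add_le_add (add_le_add hT1 hT2) hT3
    _ ≤ (|μ| + σ ^ 2 / 2 + κ + 2) * ε := by
        have h1 : |μ| * (ε / M) ≤ |μ| * ε := mul_le_mul_of_nonneg_left hqε (abs_nonneg μ)
        have h2 : σ ^ 2 / 2 * (ε / M) ^ 2 ≤ σ ^ 2 / 2 * ε :=
          mul_le_mul_of_nonneg_left hq2 (by positivity)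
        have h3 : a / 2 * (ε / M) ^ 2 ≤ a * ε := by nlinarith
        have h4 : M * b * (ε / M) = b * ε := by rw [mul_comm M b, mul_assoc, hqM]
        have h5 : a * ε + b * ε ≤ κ * ε := by nlinarith [mul_le_mul_of_nonneg_right hab hε.le]
        have h6 : 2 * c ≤ 2 * ε := by linarith
        linarith
end

section
/- Let μ ∈ ℝ, σ ≥ 0, and let V be a measure on ℝ with V({0}) = 0 and ∫_ℝ min(1, t²) dV(t) < ∞; let f be the associated Lévy exponent f(ξ) = iμξ − σ²ξ²/2 + ∫_ℝ (e^{iξt} − 1 − iξt·1_{|t|≤1}(t)) dV(t). Let 𝕋^d carry its normalized Haar probability measure λ, and let (φ_n)_{n∈ℕ} be a sequence of square-integrable real-valued functions on 𝕋^d with ‖φ_n‖_{L²(𝕋^d)} → 0 as n → ∞. Then ∫_{𝕋^d} f(φ_n(r)) dλ(r) → 0 as n → ∞. (Hence the characteristic functional φ ↦ exp(∫_{𝕋^d} f(φ(r)) dλ(r)) of any periodic Lévy white noise is continuous at the origin with respect to the L²(𝕋^d) norm.) -/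
open MeasureTheory Filter
open scoped ENNReal NNReal

lemma norm_expI_sub_one_le (x : ℝ) : ‖Complex.exp (Complex.I * x) - 1‖ ≤ |x| := by
  have hc : Complex.exp (Complex.I * x) - 1 =
      ((Real.cos x - 1 : ℝ) : ℂ) + (Real.sin x : ℝ) * Complex.I := by
    rw [mul_comm, Complex.exp_mul_I]
    push_cast
    ring
  have h2 : ‖Complex.exp (Complex.I * x) - 1‖ ^ 2 ≤ x ^ 2 := by
    rw [hc, Complex.sq_norm, Complex.normSq_add_mul_I]
    nlinarith [Real.one_sub_sq_div_two_le_cos (x := x), Real.sin_sq_add_cos_sq x]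
  nlinarith [norm_nonneg (Complex.exp (Complex.I * x) - 1), abs_nonneg x, sq_abs x]

lemma norm_expI_sub_one_sub_le (x : ℝ) :
    ‖Complex.exp (Complex.I * x) - 1 - Complex.I * x‖ ≤ x ^ 2 := by
  set g : ℝ → ℂ := fun y => Complex.exp (Complex.I * y) - 1 - Complex.I * y with hg
  have hd : ∀ y : ℝ, HasDerivAt g (Complex.I * (Complex.exp (Complex.I * y) - 1)) y := by
    intro y
    have h1 : HasDerivAt (fun y : ℝ => Complex.exp (Complex.I * y))
        (Complex.exp (Complex.I * y) * (Complex.I * 1)) y :=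
      (Complex.ofRealCLM.hasDerivAt.const_mul Complex.I).cexp
    have h2 : HasDerivAt (fun y : ℝ => Complex.I * (y : ℂ)) (Complex.I * 1) y :=
      Complex.ofRealCLM.hasDerivAt.const_mul Complex.I
    have := (h1.sub_const 1).sub h2
    convert this using 1
    exacts [rfl, rfl, by ring]
  have key := Convex.norm_image_sub_le_of_norm_hasDerivWithin_le
    (f := g) (f' := fun y => Complex.I * (Complex.exp (Complex.I * y) - 1))
    (s := Set.uIcc 0 x) (C := |x|)
    (fun y _ => (hd y).hasDerivWithinAt)
    (fun y hy => by
      have h1 : ‖Complex.I * (Complex.exp (Complex.I * y) - 1)‖ ≤ |y| := by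
        rw [norm_mul, Complex.norm_I, one_mul]
        exact norm_expI_sub_one_le y
      have h2 : |y| ≤ |x| := by
        rcases Set.mem_uIcc.mp hy with ⟨h0, h1'⟩ | ⟨h0, h1'⟩
        · rw [abs_of_nonneg h0]; exact h1'.trans (le_abs_self x)
        · rw [abs_of_nonpos h1']
          calc -y ≤ -x := neg_le_neg h0
            _ ≤ |x| := neg_le_abs x
      exact h1.trans h2)
    (convex_uIcc 0 x) Set.left_mem_uIcc Set.right_mem_uIcc
  have hg0 : g 0 = 0 := by simp [hg]
  rw [hg0, sub_zero] at key
  calc ‖g x‖ ≤ |x| * ‖x - 0‖ := key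
    _ = x ^ 2 := by rw [sub_zero, Real.norm_eq_abs, ← abs_mul, ← sq, abs_of_nonneg (sq_nonneg x)]

/-- The kernel appearing in the Lévy exponent. -/
noncomputable def levyKer (ξ t : ℝ) : ℂ :=
  Complex.exp (Complex.I * (ξ : ℂ) * (t : ℂ)) - 1 -
    Complex.I * (ξ : ℂ) * Set.indicator {s : ℝ | |s| ≤ 1} (fun s : ℝ => (s : ℂ)) t


lemma levyKer_norm_le (ξ t : ℝ) : ‖levyKer ξ t‖ ≤ (2 + ξ ^ 2) * min 1 (t ^ 2) := by
  unfold levyKer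
  by_cases h : |t| ≤ 1
  · rw [Set.indicator_of_mem (by exact h)]
    have harg : Complex.I * (ξ : ℂ) * (t : ℂ) = Complex.I * ((ξ * t : ℝ) : ℂ) := by
      push_cast; ring
    have hmin : min 1 (t ^ 2) = t ^ 2 := min_eq_right (by nlinarith [abs_nonneg t, sq_abs t])
    rw [harg]
    calc ‖Complex.exp (Complex.I * ((ξ * t : ℝ) : ℂ)) - 1 - Complex.I * ((ξ * t : ℝ) : ℂ)‖
        ≤ (ξ * t) ^ 2 := norm_expI_sub_one_sub_le (ξ * t)
      _ ≤ (2 + ξ ^ 2) * min 1 (t ^ 2) := by rw [hmin]; nlinarith [sq_nonneg ξ, sq_nonneg t]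
  · rw [Set.indicator_of_notMem (by exact h), mul_zero, sub_zero]
    have hmin : min 1 (t ^ 2) = 1 := min_eq_left (by nlinarith [abs_nonneg t, sq_abs t])
    have h1 : ‖Complex.exp (Complex.I * (ξ : ℂ) * (t : ℂ))‖ = 1 := by
      rw [Complex.norm_exp]
      simp
    calc ‖Complex.exp (Complex.I * (ξ : ℂ) * (t : ℂ)) - 1‖
        ≤ ‖Complex.exp (Complex.I * (ξ : ℂ) * (t : ℂ))‖ + ‖(1 : ℂ)‖ := norm_sub_le _ _
      _ = 2 := by rw [h1]; norm_num
      _ ≤ (2 + ξ ^ 2) * min 1 (t ^ 2) := by rw [hmin]; nlinarith [sq_nonneg ξ]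

lemma integrable_min_sq {V : Measure ℝ}
    (hV : ∫⁻ t, ENNReal.ofReal (min 1 (t ^ 2)) ∂V < ⊤) :
    Integrable (fun t => min 1 (t ^ 2)) V := by
  refine ⟨(continuous_const.min (continuous_pow 2)).aestronglyMeasurable, ?_⟩
  rw [HasFiniteIntegral]
  calc ∫⁻ t, ‖min 1 (t ^ 2)‖₊ ∂V = ∫⁻ t, ENNReal.ofReal (min 1 (t ^ 2)) ∂V := by
        refine lintegral_congr fun t => ?_
        exact Real.enorm_eq_ofReal (le_min zero_le_one (sq_nonneg t))
    _ < ⊤ := hV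

lemma levyKer_aestronglyMeasurable (ξ : ℝ) (V : Measure ℝ) :
    AEStronglyMeasurable (fun t => levyKer ξ t) V := by
  apply Measurable.aestronglyMeasurable
  apply Measurable.sub
  · apply Measurable.sub
    · exact (Complex.continuous_exp.comp ((continuous_const).mul Complex.continuous_ofReal)).measurable
    · exact measurable_const
  · exact measurable_const.mul
      (Measurable.indicator Complex.measurable_ofReal
        ((isClosed_le continuous_abs continuous_const).measurableSet))

lemma levyKer_integrable (ξ : ℝ) {V : Measure ℝ}
    (hV : ∫⁻ t, ENNReal.ofReal (min 1 (t ^ 2)) ∂V < ⊤) :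
    Integrable (fun t => levyKer ξ t) V :=
  ((integrable_min_sq hV).const_mul (2 + ξ ^ 2)).mono'
    (levyKer_aestronglyMeasurable ξ V)
    (Filter.Eventually.of_forall fun t => levyKer_norm_le ξ t)

lemma levyExponent_continuous (μ σ : ℝ) {V : Measure ℝ}
    (hV : ∫⁻ t, ENNReal.ofReal (min 1 (t ^ 2)) ∂V < ⊤) :
    Continuous (levyExponent μ σ V) := by
  have hψ : Continuous fun ξ : ℝ => ∫ t, levyKer ξ t ∂V := by
    rw [continuous_iff_continuousAt]
    intro ξ₀
    apply continuousAt_of_dominated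
      (bound := fun t => (2 + (|ξ₀| + 1) ^ 2) * min 1 (t ^ 2))
    · exact Filter.Eventually.of_forall fun ξ => levyKer_aestronglyMeasurable ξ V
    · have hb : ∀ᶠ ξ in nhds ξ₀, |ξ| ≤ |ξ₀| + 1 := by
        filter_upwards [Metric.ball_mem_nhds ξ₀ one_pos] with ξ hξ
        have := abs_sub_abs_le_abs_sub ξ ξ₀
        have h2 : |ξ - ξ₀| < 1 := by simpa [Real.dist_eq] using hξ
        linarith
      filter_upwards [hb] with ξ hξ
      refine Filter.Eventually.of_forall fun t => (levyKer_norm_le ξ t).trans ?_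
      have h1 : ξ ^ 2 ≤ (|ξ₀| + 1) ^ 2 := by
        rw [← sq_abs ξ]
        exact pow_le_pow_left₀ (abs_nonneg ξ) hξ 2
      have h2 : (0:ℝ) ≤ min 1 (t ^ 2) := le_min zero_le_one (sq_nonneg t)
      nlinarith
    · exact (integrable_min_sq hV).const_mul _
    · refine Filter.Eventually.of_forall fun t => Continuous.continuousAt ?_
      unfold levyKer
      apply Continuous.sub
      · apply Continuous.sub
        · exact Complex.continuous_exp.comp (by fun_prop)
        · exact continuous_const
      · fun_prop
  have : levyExponent μ σ V = fun ξ : ℝ =>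
      (Complex.I * (μ : ℂ) * (ξ : ℂ) - (σ : ℂ) ^ 2 * (ξ : ℂ) ^ 2 / 2) + ∫ t, levyKer ξ t ∂V := by
    rfl
  rw [this]
  exact Continuous.add (by fun_prop) hψ

lemma levyExponent_zero (μ σ : ℝ) (V : Measure ℝ) : levyExponent μ σ V 0 = 0 := by
  simp [levyExponent]

lemma levyExponent_norm_le (μ σ : ℝ) {V : Measure ℝ}
    (hV : ∫⁻ t, ENNReal.ofReal (min 1 (t ^ 2)) ∂V < ⊤) (ξ : ℝ) :
    ‖levyExponent μ σ V ξ‖ ≤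
      |μ| * |ξ| + σ ^ 2 * ξ ^ 2 / 2 + (2 + ξ ^ 2) * ∫ t, min 1 (t ^ 2) ∂V := by
  have h1 : ‖Complex.I * (μ : ℂ) * (ξ : ℂ) - (σ : ℂ) ^ 2 * (ξ : ℂ) ^ 2 / 2‖ ≤
      |μ| * |ξ| + σ ^ 2 * ξ ^ 2 / 2 := by
    refine (norm_sub_le _ _).trans ?_
    have e1 : ‖Complex.I * (μ : ℂ) * (ξ : ℂ)‖ = |μ| * |ξ| := by
      simp [norm_mul, Complex.norm_real, Real.norm_eq_abs]
    have e2 : ‖(σ : ℂ) ^ 2 * (ξ : ℂ) ^ 2 / 2‖ = σ ^ 2 * ξ ^ 2 / 2 := by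
      rw [norm_div, norm_mul]
      simp [Complex.norm_real, Real.norm_eq_abs, abs_of_nonneg (sq_nonneg σ),
        abs_of_nonneg (sq_nonneg ξ), ← Complex.ofReal_pow]
    rw [e1, e2]
  have h2 : ‖∫ t, levyKer ξ t ∂V‖ ≤ (2 + ξ ^ 2) * ∫ t, min 1 (t ^ 2) ∂V := by
    calc ‖∫ t, levyKer ξ t ∂V‖ ≤ ∫ t, (2 + ξ ^ 2) * min 1 (t ^ 2) ∂V :=
          norm_integral_le_of_norm_le ((integrable_min_sq hV).const_mul _)
            (Filter.Eventually.of_forall fun t => levyKer_norm_le ξ t)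
      _ = (2 + ξ ^ 2) * ∫ t, min 1 (t ^ 2) ∂V := integral_const_mul _ _
  calc ‖levyExponent μ σ V ξ‖ ≤
      ‖Complex.I * (μ : ℂ) * (ξ : ℂ) - (σ : ℂ) ^ 2 * (ξ : ℂ) ^ 2 / 2‖ + ‖∫ t, levyKer ξ t ∂V‖ :=
        norm_add_le _ _
    _ ≤ _ := add_le_add h1 h2

lemma integral_min_sq_nonneg (V : Measure ℝ) : (0:ℝ) ≤ ∫ t, min 1 (t ^ 2) ∂V :=
  integral_nonneg fun t => le_min zero_le_one (sq_nonneg t)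

/-- Key lemma: along a rapidly L²-convergent sequence the integrals of the Lévy
exponent tend to zero. -/
lemma levy_integral_tendsto_zero (μ σ : ℝ) {V : Measure ℝ}
    (hV : ∫⁻ t, ENNReal.ofReal (min 1 (t ^ 2)) ∂V < ⊤)
    {Ω : Type*} [MeasurableSpace Ω] (P : Measure Ω) [IsProbabilityMeasure P]
    (ψ : ℕ → Ω → ℝ) (hψ : ∀ k, AEStronglyMeasurable (ψ k) P)
    (hs : ∀ k, eLpNorm (ψ k) 2 P ≤ 2⁻¹ ^ k) :
    Tendsto (fun k => ∫ r, levyExponent μ σ V (ψ k r) ∂P) atTop (nhds 0) := by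
  set Vm : ℝ := ∫ t, min 1 (t ^ 2) ∂V with hVmdef
  have hVm0 : 0 ≤ Vm := integral_min_sq_nonneg V
  set G : Ω → ℝ≥0∞ := fun r => ∑' k, ((‖ψ k r‖₊ : ℝ≥0∞) + (‖ψ k r‖₊ : ℝ≥0∞) ^ 2) with hGdef
  have hmeas_term : ∀ k, AEMeasurable
      (fun r => (‖ψ k r‖₊ : ℝ≥0∞) + (‖ψ k r‖₊ : ℝ≥0∞) ^ 2) P :=
    fun k => (hψ k).enorm.add ((hψ k).enorm.pow_const 2)
  have hGmeas : AEMeasurable G P := AEMeasurable.ennreal_tsum hmeas_term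
  -- bound on the lintegral of G
  have hsq : ∀ k, ∫⁻ r, (‖ψ k r‖₊ : ℝ≥0∞) ^ 2 ∂P = (eLpNorm (ψ k) 2 P) ^ 2 := by
    intro k
    rw [eLpNorm_eq_lintegral_rpow_enorm_toReal two_ne_zero ENNReal.ofNat_ne_top]
    rw [← ENNReal.rpow_natCast _ 2, ← ENNReal.rpow_mul]
    norm_num
    rfl
  have hone : ∀ k, ∫⁻ r, (‖ψ k r‖₊ : ℝ≥0∞) ∂P ≤ 2⁻¹ ^ k := by
    intro k
    change ∫⁻ r, ‖ψ k r‖ₑ ∂P ≤ _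
    rw [← eLpNorm_one_eq_lintegral_enorm]
    exact (eLpNorm_le_eLpNorm_of_exponent_le one_le_two (hψ k)).trans (hs k)
  have hGint : ∫⁻ r, G r ∂P ≤ 4 := by
    rw [hGdef, lintegral_tsum hmeas_term]
    have hterm : ∀ k, ∫⁻ r, ((‖ψ k r‖₊ : ℝ≥0∞) + (‖ψ k r‖₊ : ℝ≥0∞) ^ 2) ∂P ≤
        2 * 2⁻¹ ^ k := by
      intro k
      rw [lintegral_add_left' (f := fun r => (‖ψ k r‖₊ : ℝ≥0∞)) (hψ k).enorm]
      have h2 : ∫⁻ r, (‖ψ k r‖₊ : ℝ≥0∞) ^ 2 ∂P ≤ 2⁻¹ ^ k := by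
        rw [hsq k]
        calc (eLpNorm (ψ k) 2 P) ^ 2 ≤ ((2:ℝ≥0∞)⁻¹ ^ k) ^ 2 := by
              exact pow_le_pow_left' (hs k) 2
          _ ≤ 2⁻¹ ^ k := by
              rw [sq]
              calc (2:ℝ≥0∞)⁻¹ ^ k * 2⁻¹ ^ k ≤ 1 * 2⁻¹ ^ k :=
                    mul_le_mul_left (pow_le_one' (by simp) k) _
                _ = 2⁻¹ ^ k := one_mul _
      calc ∫⁻ r, (‖ψ k r‖₊ : ℝ≥0∞) ∂P + ∫⁻ r, (‖ψ k r‖₊ : ℝ≥0∞) ^ 2 ∂P ≤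
          2⁻¹ ^ k + 2⁻¹ ^ k := add_le_add (hone k) h2
        _ = 2 * 2⁻¹ ^ k := by ring
    calc ∑' k, ∫⁻ r, ((‖ψ k r‖₊ : ℝ≥0∞) + (‖ψ k r‖₊ : ℝ≥0∞) ^ 2) ∂P ≤
        ∑' k : ℕ, 2 * 2⁻¹ ^ k := ENNReal.tsum_le_tsum hterm
      _ = 2 * ∑' k : ℕ, 2⁻¹ ^ k := ENNReal.tsum_mul_left
      _ = 4 := by rw [ENNReal.tsum_geometric]; norm_num
  have hGfin : ∀ᵐ r ∂P, G r < ⊤ :=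
    ae_lt_top' hGmeas (by exact (hGint.trans_lt (by norm_num)).ne)
  -- the dominating function
  set K : ℝ := |μ| + σ ^ 2 / 2 + Vm with hKdef
  have hK0 : 0 ≤ K := by positivity
  set bound : Ω → ℝ := fun r => 2 * Vm + K * (G r).toReal with hbounddef
  have hbound_int : Integrable bound P := by
    refine (integrable_const (2 * Vm)).add (Integrable.const_mul ?_ K)
    refine ⟨hGmeas.ennreal_toReal.aestronglyMeasurable, ?_⟩
    rw [HasFiniteIntegral]
    calc ∫⁻ r, ‖(G r).toReal‖₊ ∂P ≤ ∫⁻ r, G r ∂P := by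
          refine lintegral_mono fun r => ?_
          change ‖(G r).toReal‖ₑ ≤ G r
          rw [Real.enorm_eq_ofReal ENNReal.toReal_nonneg]
          exact ENNReal.ofReal_toReal_le
      _ ≤ 4 := hGint
      _ < ⊤ := by norm_num
  have hdom : ∀ k, ∀ᵐ r ∂P, ‖levyExponent μ σ V (ψ k r)‖ ≤ bound r := by
    intro k
    filter_upwards [hGfin] with r hr
    set ξ := ψ k r
    have hle : (‖ξ‖₊ : ℝ≥0∞) + (‖ξ‖₊ : ℝ≥0∞) ^ 2 ≤ G r := ENNReal.le_tsum k
    have htr : |ξ| + ξ ^ 2 ≤ (G r).toReal := by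
      have := ENNReal.toReal_mono hr.ne hle
      rwa [ENNReal.toReal_add ENNReal.coe_ne_top (by simp), ENNReal.coe_toReal,
        ENNReal.toReal_pow, ENNReal.coe_toReal, coe_nnnorm, Real.norm_eq_abs, sq_abs] at this
    have h1 := levyExponent_norm_le μ σ hV ξ
    have habs : 0 ≤ |ξ| := abs_nonneg ξ
    have hsq' : ξ ^ 2 = |ξ| ^ 2 := (sq_abs ξ).symm
    calc ‖levyExponent μ σ V ξ‖ ≤ |μ| * |ξ| + σ ^ 2 * ξ ^ 2 / 2 + (2 + ξ ^ 2) * Vm := h1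
      _ ≤ 2 * Vm + K * (|ξ| + ξ ^ 2) := by
          rw [hKdef]
          nlinarith [mul_nonneg (abs_nonneg μ) (sq_nonneg ξ),
            mul_nonneg (sq_nonneg σ) habs, mul_nonneg hVm0 habs]
      _ ≤ 2 * Vm + K * (G r).toReal := by
          have := mul_le_mul_of_nonneg_left htr hK0
          linarith
  -- pointwise convergence
  have hptwise : ∀ᵐ r ∂P, Tendsto (fun k => levyExponent μ σ V (ψ k r)) atTop (nhds 0) := by
    filter_upwards [hGfin] with r hr
    have hterm0 : Tendsto (fun k => (‖ψ k r‖₊ : ℝ≥0∞) + (‖ψ k r‖₊ : ℝ≥0∞) ^ 2) atTop (nhds 0) :=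
      ENNReal.tendsto_atTop_zero_of_tsum_ne_top hr.ne
    have hterm1 : Tendsto (fun k => (‖ψ k r‖₊ : ℝ≥0∞)) atTop (nhds 0) := by
      refine tendsto_of_tendsto_of_tendsto_of_le_of_le tendsto_const_nhds hterm0
        (fun k => zero_le) (fun k => le_self_add)
    have hterm2 : Tendsto (fun k => ψ k r) atTop (nhds 0) := by
      rw [tendsto_zero_iff_norm_tendsto_zero]
      have := (ENNReal.tendsto_toReal (by simp)).comp hterm1
      simpa [Function.comp_def] using this
    have := ((levyExponent_continuous μ σ hV).tendsto 0).comp hterm2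
    rwa [levyExponent_zero] at this
  have hmeasF : ∀ k, AEStronglyMeasurable (fun r => levyExponent μ σ V (ψ k r)) P :=
    fun k => (levyExponent_continuous μ σ hV).comp_aestronglyMeasurable (hψ k)
  have := tendsto_integral_of_dominated_convergence bound hmeasF hbound_int hdom hptwise
  simpa using this

theorem stmt10 (d : ℕ) (hd : 1 ≤ d) (μ σ : ℝ) (hσ : 0 ≤ σ) (V : Measure ℝ)
    (hV0 : V {0} = 0) (hV : ∫⁻ t, ENNReal.ofReal (min 1 (t ^ 2)) ∂V < ⊤)
    (φ : ℕ → (Fin d → AddCircle (1 : ℝ)) → ℝ) (hφ : ∀ n, MemLp (φ n) 2 volume)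
    (hlim : Tendsto (fun n => eLpNorm (φ n) 2 volume) atTop (nhds 0)) :
    Tendsto (fun n => ∫ r, levyExponent μ σ V (φ n r) ∂volume) atTop (nhds 0) := by
  haveI : IsProbabilityMeasure (volume : Measure (AddCircle (1:ℝ))) :=
    ⟨by rw [AddCircle.measure_univ]; simp⟩
  haveI : IsProbabilityMeasure (volume : Measure (Fin d → AddCircle (1:ℝ))) := by
    infer_instance
  apply tendsto_of_subseq_tendsto
  intro ns hns
  have h2 : Tendsto (fun k => eLpNorm (φ (ns k)) 2 volume) atTop (nhds 0) := hlim.comp hns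
  have hsel : ∀ m : ℕ, ∀ᶠ k in atTop, eLpNorm (φ (ns k)) 2 volume ≤ 2⁻¹ ^ m := by
    intro m
    have hpos : (0 : ℝ≥0∞) < 2⁻¹ ^ m := by
      exact ENNReal.pow_pos (by simp) m
    exact h2.eventually_le_const hpos
  obtain ⟨ms, _, hms⟩ := extraction_forall_of_eventually hsel
  exact ⟨ms, levy_integral_tendsto_zero μ σ hV volume (fun k => φ (ns (ms k)))
    (fun k => (hφ (ns (ms k))).aestronglyMeasurable) (fun k => hms k)⟩
end
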